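/- Let L be a graded Lie algebra over a field, with grading L = L_1 ⊕ L_2 ⊕ L_3 ⊕ L_4 ([L_i, L_j] ≤ L_{i+j}, and L_i = 0 for i ≥ 5), generated by L_1, and suppose dim L_3 = 1 and the second derived subalgebra L'' is nonzero with L'' = L_4 and dim L_4 = 1. Then there exist a, b, c ∈ L_1 with L_2 spanned by [a,b] and [a,c], L_4 spanned by [[a,b],[a,c]], and [b,c] = [a,b,a] = [a,b,b] = [a,c,a] = 0 (left-normed brackets). -/

import Mathlib

section Aux

lemma aux_dim1 {K V : Type*} [Field K] [AddCommGroup V] [Module K V]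
    (h : Module.finrank K V = 1) (v : V) (hv : v ≠ 0) (w : V) : ∃ c : K, w = c • v := by
  obtain ⟨u, hu, hs⟩ := finrank_eq_one_iff'.mp h
  obtain ⟨a, ha⟩ := hs v
  have ha0 : a ≠ 0 := by rintro rfl; rw [zero_smul] at ha; exact hv ha.symm
  obtain ⟨b, hb⟩ := hs w
  refine ⟨b * a⁻¹, by rw [← hb, ← ha, smul_smul, mul_assoc, inv_mul_cancel₀ ha0, mul_one]⟩

lemma aux_dim2 {K V : Type*} [Field K] [AddCommGroup V] [Module K V]
    (h : Module.finrank K V = 2) (x y : V)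
    (hind : ∀ s t : K, s • x + t • y = 0 → s = 0 ∧ t = 0) (w : V) :
    ∃ s t : K, w = s • x + t • y := by
  have : FiniteDimensional K V := Module.finite_of_finrank_pos (by omega)
  have hli : LinearIndependent K ![x, y] := LinearIndependent.pair_iff.mpr hind
  have h2 : Submodule.span K {x, y} = ⊤ := by
    apply Submodule.eq_top_of_finrank_eq
    rw [h]
    have := finrank_span_eq_card hli
    rw [show Set.range ![x, y] = {x, y} by
      simp [Matrix.range_cons, Matrix.range_empty, Set.pair_comm y x]] at this
    simpa using this
  have : w ∈ Submodule.span K {x, y} := h2 ▸ Submodule.mem_top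
  obtain ⟨s, t, hst⟩ := Submodule.mem_span_pair.mp this
  exact ⟨s, t, by rw [← hst]⟩

variable {K : Type*} [Field K] {L : Type*} [LieRing L] [LieAlgebra K L]

lemma aux_sup_lie_left {A B C P : Submodule K L}
    (h1 : ∀ a ∈ A, ∀ c ∈ C, ⁅a, c⁆ ∈ P) (h2 : ∀ b ∈ B, ∀ c ∈ C, ⁅b, c⁆ ∈ P) :
    ∀ x ∈ A ⊔ B, ∀ c ∈ C, ⁅x, c⁆ ∈ P := by
  intro x hx c hc
  obtain ⟨a, ha, b, hb, rfl⟩ := Submodule.mem_sup.mp hx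
  rw [add_lie]
  exact P.add_mem (h1 a ha c hc) (h2 b hb c hc)

lemma aux_sup_lie_right {A B C P : Submodule K L}
    (h1 : ∀ a ∈ A, ∀ b ∈ B, ⁅a, b⁆ ∈ P) (h2 : ∀ a ∈ A, ∀ c ∈ C, ⁅a, c⁆ ∈ P) :
    ∀ a ∈ A, ∀ x ∈ B ⊔ C, ⁅a, x⁆ ∈ P := by
  intro a ha x hx
  obtain ⟨b, hb, c, hc, rfl⟩ := Submodule.mem_sup.mp hx
  rw [lie_add]
  exact P.add_mem (h1 a ha b hb) (h2 a ha c hc)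

end Aux

theorem graded_lie_good_generators
    {K : Type*} [Field K] {L : Type*} [LieRing L] [LieAlgebra K L]
    (M : ℕ → Submodule K L)
    (hinternal : DirectSum.IsInternal M)
    (hM0 : M 0 = ⊥) (hhigh : ∀ i, 5 ≤ i → M i = ⊥)
    (hgrade : ∀ i j, ∀ x ∈ M i, ∀ y ∈ M j, ⁅x, y⁆ ∈ M (i + j))
    (hgen : LieSubalgebra.lieSpan K L (M 1 : Set L) = ⊤)
    (hdim2 : Module.finrank K (M 2) = 2)
    (hdim3 : Module.finrank K (M 3) = 1)
    (hdim4 : Module.finrank K (M 4) = 1)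
    (hder : (LieAlgebra.derivedSeries K L 2).toSubmodule = M 4)
    (hne : LieAlgebra.derivedSeries K L 2 ≠ ⊥) :
    ∃ a b c : L, a ∈ M 1 ∧ b ∈ M 1 ∧ c ∈ M 1 ∧
      M 2 = Submodule.span K {⁅a, b⁆, ⁅a, c⁆} ∧
      M 4 = Submodule.span K {⁅⁅a, b⁆, ⁅a, c⁆⁆} ∧
      ⁅b, c⁆ = 0 ∧ ⁅⁅a, b⁆, a⁆ = 0 ∧ ⁅⁅a, b⁆, b⁆ = 0 ∧ ⁅⁅a, c⁆, a⁆ = 0 := by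
  classical
  -- brackets into high degrees vanish
  have hz : ∀ i j, 5 ≤ i + j → ∀ x ∈ M i, ∀ y ∈ M j, ⁅x, y⁆ = 0 := by
    intro i j hij x hx y hy
    have := hgrade i j x hx y hy
    rw [hhigh _ hij] at this
    simpa using this
  -- the sum of the four pieces is everything
  have htop : M 1 ⊔ (M 2 ⊔ (M 3 ⊔ M 4)) = ⊤ := by
    refine le_antisymm le_top ?_
    rw [← hinternal.submodule_iSup_eq_top]
    refine iSup_le fun i => ?_
    match i with
    | 0 => rw [hM0]; exact bot_le
    | 1 => exact le_sup_left
    | 2 => exact le_sup_of_le_right le_sup_left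
    | 3 => exact le_sup_of_le_right (le_sup_of_le_right le_sup_left)
    | 4 => exact le_sup_of_le_right (le_sup_of_le_right le_sup_right)
    | (n+5) => rw [hhigh (n+5) (by omega)]; exact bot_le
  -- independence
  have hdisj2 : M 2 ⊓ (M 1 ⊔ (M 3 ⊔ M 4)) = ⊥ := by
    have hind := hinternal.submodule_iSupIndep
    have h2 := (iSupIndep_def.mp hind) 2
    refine disjoint_iff.mp (h2.mono_right ?_)
    refine sup_le (le_iSup₂ (f := fun j _ => M j) 1 (by norm_num)) (sup_le
      (le_iSup₂ (f := fun j _ => M j) 3 (by norm_num))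
      (le_iSup₂ (f := fun j _ => M j) 4 (by norm_num)))
  -- M 2 is spanned by brackets of degree-1 elements
  set Wspan : Submodule K L :=
    Submodule.span K {z | ∃ x ∈ M 1, ∃ y ∈ M 1, ⁅x, y⁆ = z} with hWspan_def
  have hWle : Wspan ≤ M 2 := by
    rw [hWspan_def, Submodule.span_le]
    rintro z ⟨x, hx, y, hy, rfl⟩
    exact hgrade 1 1 x hx y hy
  have hgen2 : M 2 ≤ Wspan := by
    set P : Submodule K L := Wspan ⊔ (M 1 ⊔ (M 3 ⊔ M 4)) with hP_def
    have hM1P : M 1 ≤ P := le_sup_of_le_right le_sup_left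
    have hMP : ∀ k, 3 ≤ k → M k ≤ P := by
      intro k hk
      match k, hk with
      | 3, _ => exact le_sup_of_le_right (le_sup_of_le_right le_sup_left)
      | 4, _ => exact le_sup_of_le_right (le_sup_of_le_right le_sup_right)
      | (n+5), _ => rw [hhigh (n+5) (by omega)]; exact bot_le
    have hclosed : ∀ x ∈ P, ∀ y ∈ P, ⁅x, y⁆ ∈ P := by
      have h11 : ∀ x ∈ M 1, ∀ y ∈ M 1, ⁅x, y⁆ ∈ P :=
        fun x hx y hy => le_sup_left (a := Wspan) (Submodule.subset_span ⟨x, hx, y, hy, rfl⟩)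
      have hij : ∀ i j, 3 ≤ i + j → ∀ x ∈ M i, ∀ y ∈ M j, ⁅x, y⁆ ∈ P :=
        fun i j hijk x hx y hy => hMP _ hijk (hgrade i j x hx y hy)
      have h1W : ∀ x ∈ M 1, ∀ y ∈ Wspan, ⁅x, y⁆ ∈ P :=
        fun x hx y hy => hij 1 2 (by omega) x hx y (hWle hy)
      have hWj : ∀ j, 1 ≤ j → ∀ x ∈ Wspan, ∀ y ∈ M j, ⁅x, y⁆ ∈ P :=
        fun j hj x hx y hy => hij 2 j (by omega) x (hWle hx) y hy
      have hjW : ∀ j, 3 ≤ j → ∀ x ∈ M j, ∀ y ∈ Wspan, ⁅x, y⁆ ∈ P :=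
        fun j hj x hx y hy => hij j 2 (by omega) x hx y (hWle hy)
      have hWW : ∀ x ∈ Wspan, ∀ y ∈ Wspan, ⁅x, y⁆ ∈ P :=
        fun x hx y hy => hij 2 2 (by omega) x (hWle hx) y (hWle hy)
      exact aux_sup_lie_left
        (aux_sup_lie_right hWW (aux_sup_lie_right (hWj 1 (by omega))
          (aux_sup_lie_right (hWj 3 (by omega)) (hWj 4 (by omega)))))
        (aux_sup_lie_left
          (aux_sup_lie_right h1W (aux_sup_lie_right h11
            (aux_sup_lie_right (hij 1 3 (by omega)) (hij 1 4 (by omega)))))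
          (aux_sup_lie_left
            (aux_sup_lie_right (hjW 3 (by omega)) (aux_sup_lie_right (hij 3 1 (by omega))
              (aux_sup_lie_right (hij 3 3 (by omega)) (hij 3 4 (by omega)))))
            (aux_sup_lie_right (hjW 4 (by omega)) (aux_sup_lie_right (hij 4 1 (by omega))
              (aux_sup_lie_right (hij 4 3 (by omega)) (hij 4 4 (by omega)))))))
    have hPtop : P = ⊤ := by
      set S : LieSubalgebra K L :=
        { toSubmodule := P, lie_mem' := fun {x y} hx hy => hclosed x hx y hy } with hS_def
      have : LieSubalgebra.lieSpan K L (M 1 : Set L) ≤ S :=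
        LieSubalgebra.lieSpan_le.mpr (fun z hz => hM1P hz)
      rw [hgen] at this
      have : S = ⊤ := top_le_iff.mp this
      have := congrArg (fun T : LieSubalgebra K L => T.toSubmodule) this
      simpa [hS_def] using this
    -- modular law
    have hcalc : M 2 = Wspan := by
      calc M 2 = P ⊓ M 2 := by rw [hPtop, top_inf_eq]
        _ = Wspan ⊔ ((M 1 ⊔ (M 3 ⊔ M 4)) ⊓ M 2) := by
            rw [hP_def, sup_inf_assoc_of_le _ hWle]
        _ = Wspan := by rw [inf_comm, hdisj2, sup_bot_eq]
    exact le_of_eq hcalc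
  -- existence of non-commuting pair in M 2
  have hC : ∃ u ∈ M 2, ∃ v ∈ M 2, ⁅u, v⁆ ≠ 0 := by
    by_contra hcon
    push_neg at hcon
    apply hne
    -- the ideal M2 ⊔ M3 ⊔ M4
    set Rsub : Submodule K L := M 2 ⊔ (M 3 ⊔ M 4) with hR_def
    have hMR : ∀ k, 2 ≤ k → M k ≤ Rsub := by
      intro k hk
      match k, hk with
      | 2, _ => exact le_sup_left
      | 3, _ => exact le_sup_of_le_right le_sup_left
      | 4, _ => exact le_sup_of_le_right le_sup_right
      | (n+5), _ => rw [hhigh (n+5) (by omega)]; exact bot_le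
    have hijR : ∀ i j, 1 ≤ i → 1 ≤ j → ∀ x ∈ M i, ∀ y ∈ M j, ⁅x, y⁆ ∈ Rsub :=
      fun i j hi hj x hx y hy => hMR _ (by omega) (hgrade i j x hx y hy)
    have hallR : ∀ x ∈ (⊤ : Submodule K L), ∀ y ∈ (⊤ : Submodule K L), ⁅x, y⁆ ∈ Rsub := by
      rw [← htop]
      exact aux_sup_lie_left
        (aux_sup_lie_right (hijR 1 1 le_rfl le_rfl) (aux_sup_lie_right (hijR 1 2 le_rfl (by omega))
          (aux_sup_lie_right (hijR 1 3 le_rfl (by omega)) (hijR 1 4 le_rfl (by omega)))))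
        (aux_sup_lie_left
          (aux_sup_lie_right (hijR 2 1 (by omega) le_rfl) (aux_sup_lie_right (hijR 2 2 (by omega) (by omega))
            (aux_sup_lie_right (hijR 2 3 (by omega) (by omega)) (hijR 2 4 (by omega) (by omega)))))
          (aux_sup_lie_left
            (aux_sup_lie_right (hijR 3 1 (by omega) le_rfl) (aux_sup_lie_right (hijR 3 2 (by omega) (by omega))
              (aux_sup_lie_right (hijR 3 3 (by omega) (by omega)) (hijR 3 4 (by omega) (by omega)))))
            (aux_sup_lie_right (hijR 4 1 (by omega) le_rfl) (aux_sup_lie_right (hijR 4 2 (by omega) (by omega))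
              (aux_sup_lie_right (hijR 4 3 (by omega) (by omega)) (hijR 4 4 (by omega) (by omega)))))))
    -- brackets of elements of Rsub are zero
    have hRR : ∀ x ∈ Rsub, ∀ y ∈ Rsub, ⁅x, y⁆ ∈ (⊥ : Submodule K L) := by
      have h22 : ∀ x ∈ M 2, ∀ y ∈ M 2, ⁅x, y⁆ ∈ (⊥ : Submodule K L) :=
        fun x hx y hy => by rw [hcon x hx y hy]; exact Submodule.zero_mem _
      have hzz : ∀ i j, 5 ≤ i + j → ∀ x ∈ M i, ∀ y ∈ M j, ⁅x, y⁆ ∈ (⊥ : Submodule K L) :=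
        fun i j hij x hx y hy => by rw [hz i j hij x hx y hy]; exact Submodule.zero_mem _
      exact aux_sup_lie_left
        (aux_sup_lie_right h22 (aux_sup_lie_right (hzz 2 3 (by omega)) (hzz 2 4 (by omega))))
        (aux_sup_lie_left
          (aux_sup_lie_right (hzz 3 2 (by omega)) (aux_sup_lie_right (hzz 3 3 (by omega)) (hzz 3 4 (by omega))))
          (aux_sup_lie_right (hzz 4 2 (by omega)) (aux_sup_lie_right (hzz 4 3 (by omega)) (hzz 4 4 (by omega)))))
    -- derived series
    have hD1 : ∀ z ∈ LieAlgebra.derivedSeries K L 1, z ∈ Rsub := by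
      intro z hzmem
      have hd1 : LieAlgebra.derivedSeries K L 1 = ⁅(⊤ : LieIdeal K L), (⊤ : LieIdeal K L)⁆ := by
        rw [LieAlgebra.derivedSeries_def, LieAlgebra.derivedSeriesOfIdeal_succ,
          LieAlgebra.derivedSeriesOfIdeal_zero]
      rw [hd1, ← LieSubmodule.mem_toSubmodule, LieSubmodule.lieIdeal_oper_eq_linear_span] at hzmem
      refine Submodule.span_le.mpr ?_ hzmem
      rintro w ⟨x, n, rfl⟩
      exact hallR x Submodule.mem_top n Submodule.mem_top
    have hD2 : LieAlgebra.derivedSeries K L 2 ≤ ⊥ := by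
      have hd2 : LieAlgebra.derivedSeries K L 2 =
          ⁅LieAlgebra.derivedSeries K L 1, LieAlgebra.derivedSeries K L 1⁆ := by
        rw [LieAlgebra.derivedSeries_def, LieAlgebra.derivedSeriesOfIdeal_succ,
          ← LieAlgebra.derivedSeries_def]
      rw [hd2, LieSubmodule.lieIdeal_oper_eq_span, LieSubmodule.lieSpan_le]
      rintro w ⟨x, n, rfl⟩
      have := hRR x (hD1 x x.2) n (hD1 n n.2)
      simp only [Submodule.mem_bot] at this
      simp [this]
    exact le_bot_iff.mp hD2
  obtain ⟨u0, hu0, v0, hv0, hs0⟩ := hC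
  obtain ⟨s0, hs0eq⟩ : ∃ s : L, ⁅u0, v0⁆ = s := ⟨⁅u0, v0⁆, rfl⟩
  have hs0ne : s0 ≠ 0 := hs0eq ▸ hs0
  have hs0mem : s0 ∈ M 4 := hs0eq ▸ hgrade 2 2 u0 hu0 v0 hv0
  -- spanning for M 4
  have hspan4 : ∀ z ∈ M 4, ∃ k : K, z = k • s0 := by
    intro z hzm
    obtain ⟨c, hc⟩ := aux_dim1 hdim4 (⟨s0, hs0mem⟩ : M 4)
      (fun h => hs0ne (by simpa using congrArg Subtype.val h)) ⟨z, hzm⟩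
    exact ⟨c, by simpa using congrArg Subtype.val hc⟩
  -- spanning for M 2
  have hv0ne : v0 ≠ 0 := by rintro rfl; simp at hs0
  have hspan2 : ∀ w ∈ M 2, ∃ α γ : K, w = α • u0 + γ • v0 := by
    intro w hw
    have hind : ∀ s t : K, s • (⟨u0, hu0⟩ : M 2) + t • ⟨v0, hv0⟩ = 0 → s = 0 ∧ t = 0 := by
      intro s t hst
      have hst' : s • u0 + t • v0 = 0 := by simpa using congrArg Subtype.val hst
      have h1 : ⁅s • u0 + t • v0, v0⁆ = 0 := by rw [hst']; simp
      rw [add_lie, smul_lie, smul_lie, lie_self, smul_zero, add_zero] at h1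
      have hs' : s = 0 := by
        rcases smul_eq_zero.mp h1 with h | h
        · exact h
        · exact absurd h hs0
      subst hs'
      rw [zero_smul, zero_add] at hst'
      rcases smul_eq_zero.mp hst' with h | h
      · exact ⟨rfl, h⟩
      · exact absurd h hv0ne
    obtain ⟨α, γ, hαγ⟩ := aux_dim2 hdim2 (⟨u0, hu0⟩ : M 2) ⟨v0, hv0⟩ hind ⟨w, hw⟩
    exact ⟨α, γ, by simpa using congrArg Subtype.val hαγ⟩
  -- nondegeneracy
  have hnd : ∀ w ∈ M 2, ⁅w, u0⁆ = 0 → ⁅w, v0⁆ = 0 → w = 0 := by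
    intro w hw h1 h2
    obtain ⟨α, γ, rfl⟩ := hspan2 w hw
    rw [add_lie, smul_lie, smul_lie, lie_self, smul_zero, zero_add] at h1
    have hγ : γ = 0 := by
      rcases smul_eq_zero.mp h1 with h | h
      · exact h
      · exfalso; apply hs0; rw [← lie_skew, h, neg_zero]
    subst hγ
    rw [add_lie, smul_lie, smul_lie, lie_self, smul_zero, add_zero] at h2
    rcases smul_eq_zero.mp h2 with h | h
    · rw [h]; simp
    · exact absurd h hs0
  -- a nonzero element of M 3
  have hM3ne : ∃ t ∈ M 3, t ≠ (0 : L) := by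
    obtain ⟨v, hv, -⟩ := finrank_eq_one_iff'.mp hdim3
    exact ⟨v, v.2, fun h => hv (Subtype.val_injective h)⟩
  obtain ⟨t0, ht0mem, ht0ne⟩ := hM3ne
  have hspan3 : ∀ z ∈ M 3, ∃ k : K, z = k • t0 := by
    intro z hzm
    obtain ⟨c, hc⟩ := aux_dim1 hdim3 (⟨t0, ht0mem⟩ : M 3)
      (fun h => ht0ne (by simpa using congrArg Subtype.val h)) ⟨z, hzm⟩
    exact ⟨c, by simpa using congrArg Subtype.val hc⟩
  -- there is a1 ∈ M 1 with ⁅a1, t0⁆ ≠ 0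
  have ha1ex : ∃ a1 ∈ M 1, ⁅a1, t0⁆ ≠ 0 := by
    by_contra hcon
    push_neg at hcon
    have h3 : ∀ x ∈ M 1, ∀ t ∈ M 3, ⁅x, t⁆ = 0 := by
      intro x hx t ht
      obtain ⟨k, rfl⟩ := hspan3 t ht
      rw [lie_smul, hcon x hx, smul_zero]
    have hWz : ∀ w ∈ Wspan, ∀ u ∈ M 2, ⁅w, u⁆ = 0 := by
      intro w hw
      refine Submodule.span_induction ?_ ?_ ?_ ?_ hw
      · rintro z ⟨x, hx, y, hy, rfl⟩ u hu
        rw [lie_lie]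
        rw [h3 x hx _ (hgrade 1 2 y hy u hu), h3 y hy _ (hgrade 1 2 x hx u hu), sub_zero]
      · intro u _; rw [zero_lie]
      · intro z1 z2 _ _ ih1 ih2 u hu; rw [add_lie, ih1 u hu, ih2 u hu, add_zero]
      · intro k z _ ih u hu; rw [smul_lie, ih u hu, smul_zero]
    exact hs0 (hWz u0 (hgen2 hu0) v0 hv0)
  obtain ⟨a1, ha1mem, ha1t0⟩ := ha1ex
  -- normalize t0
  obtain ⟨κ, hκ⟩ := hspan4 ⁅a1, t0⁆ (hgrade 1 3 a1 ha1mem t0 ht0mem)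
  have hκne : κ ≠ 0 := by rintro rfl; rw [zero_smul] at hκ; exact ha1t0 hκ
  obtain ⟨t1, ht1mem, hat1, hspan3'⟩ :
      ∃ t1, t1 ∈ M 3 ∧ ⁅a1, t1⁆ = s0 ∧ (∀ z ∈ M 3, ∃ k : K, z = k • t1) := by
    refine ⟨κ⁻¹ • t0, Submodule.smul_mem _ _ ht0mem, ?_, ?_⟩
    · rw [lie_smul, hκ, smul_smul, inv_mul_cancel₀ hκne, one_smul]
    · intro z hzm
      obtain ⟨k, hk⟩ := hspan3 z hzm
      exact ⟨k * κ, by rw [hk, smul_smul, mul_assoc, mul_inv_cancel₀ hκne, mul_one]⟩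
  -- commutation of "V0" elements
  have hμ0 : ∀ x ∈ M 1, ⁅x, t1⁆ = 0 → ∀ y ∈ M 1, ⁅y, t1⁆ = 0 → ⁅x, y⁆ = 0 := by
    intro x hx hxt y hy hyt
    have key : ∀ u ∈ M 2, ⁅⁅x, y⁆, u⁆ = 0 := by
      intro u hu
      obtain ⟨k1, hk1⟩ := hspan3' ⁅y, u⁆ (hgrade 1 2 y hy u hu)
      obtain ⟨k2, hk2⟩ := hspan3' ⁅x, u⁆ (hgrade 1 2 x hx u hu)
      rw [lie_lie, hk1, hk2, lie_smul, lie_smul, hxt, hyt, smul_zero, smul_zero, sub_zero]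
    exact hnd _ (hgrade 1 1 x hx y hy) (key u0 hu0) (key v0 hv0)
  -- key identity
  have hkey : ∀ b ∈ M 1, ⁅b, t1⁆ = 0 → ∀ u ∈ M 2, ∀ k : K, ⁅b, u⁆ = k • t1 →
      ⁅⁅a1, b⁆, u⁆ = k • s0 := by
    intro b hb hbt u hu k hk
    obtain ⟨m, hm⟩ := hspan3' ⁅a1, u⁆ (hgrade 1 2 a1 ha1mem u hu)
    rw [lie_lie, hk, hm, lie_smul, lie_smul, hat1, hbt, smul_zero, sub_zero]
  -- surjectivity: every element of M 2 is ⁅a1, z⁆ for z ∈ V0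
  have hsurj : ∀ w ∈ M 2, ∃ z, z ∈ M 1 ∧ ⁅z, t1⁆ = 0 ∧ ⁅a1, z⁆ = w := by
    intro w hw
    have hw' : w ∈ Wspan := hgen2 hw
    refine Submodule.span_induction ?_ ?_ ?_ ?_ hw'
    · rintro z ⟨x, hx, y, hy, rfl⟩
      obtain ⟨kx, hkx⟩ := hspan4 ⁅x, t1⁆ (hgrade 1 3 x hx t1 ht1mem)
      obtain ⟨ky, hky⟩ := hspan4 ⁅y, t1⁆ (hgrade 1 3 y hy t1 ht1mem)
      obtain ⟨x', hx'def⟩ : ∃ x' : L, x' = x - kx • a1 := ⟨_, rfl⟩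
      obtain ⟨y', hy'def⟩ : ∃ y' : L, y' = y - ky • a1 := ⟨_, rfl⟩
      have hx'mem : x' ∈ M 1 := hx'def ▸ Submodule.sub_mem _ hx (Submodule.smul_mem _ _ ha1mem)
      have hy'mem : y' ∈ M 1 := hy'def ▸ Submodule.sub_mem _ hy (Submodule.smul_mem _ _ ha1mem)
      have hx't : ⁅x', t1⁆ = 0 := by
        rw [hx'def, sub_lie, smul_lie, hat1, hkx, sub_self]
      have hy't : ⁅y', t1⁆ = 0 := by
        rw [hy'def, sub_lie, smul_lie, hat1, hky, sub_self]
      refine ⟨kx • y' - ky • x', Submodule.sub_mem _ (Submodule.smul_mem _ _ hy'mem)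
        (Submodule.smul_mem _ _ hx'mem), ?_, ?_⟩
      · rw [sub_lie, smul_lie, smul_lie, hx't, hy't, smul_zero, smul_zero, sub_self]
      · have hxx : x = x' + kx • a1 := by rw [hx'def]; abel
        have hyy : y = y' + ky • a1 := by rw [hy'def]; abel
        rw [lie_sub, lie_smul, lie_smul, hxx, hyy]
        rw [add_lie, lie_add, lie_add, hμ0 x' hx'mem hx't y' hy'mem hy't]
        rw [smul_lie, lie_smul, lie_smul, smul_lie, lie_self, smul_zero, smul_zero]
        rw [← lie_skew x' a1]
        module
    · exact ⟨0, Submodule.zero_mem _, by rw [zero_lie], by rw [lie_zero]⟩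
    · rintro w1 w2 _ _ ⟨z1, hz1, hz1t, hz1b⟩ ⟨z2, hz2, hz2t, hz2b⟩
      exact ⟨z1 + z2, Submodule.add_mem _ hz1 hz2, by rw [add_lie, hz1t, hz2t, add_zero],
        by rw [lie_add, hz1b, hz2b]⟩
    · rintro k w _ ⟨z1, hz1, hz1t, hz1b⟩
      exact ⟨k • z1, Submodule.smul_mem _ _ hz1, by rw [smul_lie, hz1t, smul_zero],
        by rw [lie_smul, hz1b]⟩
  -- the coefficients p, q
  obtain ⟨p, hp⟩ := hspan3' ⁅u0, a1⁆ (hgrade 2 1 u0 hu0 a1 ha1mem)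
  obtain ⟨q, hq⟩ := hspan3' ⁅v0, a1⁆ (hgrade 2 1 v0 hv0 a1 ha1mem)
  -- choose b'
  obtain ⟨b', hb'mem, hb't, hb'z⟩ := hsurj ((-q) • u0 + p • v0)
    (Submodule.add_mem _ (Submodule.smul_mem _ _ hu0) (Submodule.smul_mem _ _ hv0))
  have hcancel : ∀ c d : K, c • s0 = d • s0 → c = d := by
    intro c d hcd
    have h0 : (c - d) • s0 = 0 := by rw [sub_smul, hcd, sub_self]
    rcases smul_eq_zero.mp h0 with h | h
    · exact sub_eq_zero.mp h
    · exact absurd h hs0ne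
  obtain ⟨cu, hcu⟩ := hspan3' ⁅b', u0⁆ (hgrade 1 2 b' hb'mem u0 hu0)
  obtain ⟨cv, hcv⟩ := hspan3' ⁅b', v0⁆ (hgrade 1 2 b' hb'mem v0 hv0)
  have hzu : ⁅(-q) • u0 + p • v0, u0⁆ = (-p) • s0 := by
    rw [add_lie, smul_lie, smul_lie, lie_self, smul_zero, zero_add, ← hs0eq,
      ← lie_skew v0 u0, smul_neg, neg_smul]
  have hzv : ⁅(-q) • u0 + p • v0, v0⁆ = (-q) • s0 := by
    rw [add_lie, smul_lie, smul_lie, lie_self, smul_zero, add_zero, hs0eq]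
  have hcu' : cu = -p := by
    apply hcancel
    rw [← hkey b' hb'mem hb't u0 hu0 cu hcu, hb'z, hzu]
  have hcv' : cv = -q := by
    apply hcancel
    rw [← hkey b' hb'mem hb't v0 hv0 cv hcv, hb'z, hzv]
  -- define a
  obtain ⟨a, ha_def⟩ : ∃ x : L, x = a1 - b' := ⟨_, rfl⟩
  have hamem : a ∈ M 1 := ha_def ▸ Submodule.sub_mem _ ha1mem hb'mem
  have hat : ⁅a, t1⁆ = s0 := by rw [ha_def, sub_lie, hat1, hb't, sub_zero]
  have hu0a : ⁅u0, a⁆ = 0 := by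
    rw [ha_def, lie_sub, hp, ← lie_skew u0 b', hcu, hcu', neg_smul, neg_neg, sub_self]
  have hv0a : ⁅v0, a⁆ = 0 := by
    rw [ha_def, lie_sub, hq, ← lie_skew v0 b', hcv, hcv', neg_smul, neg_neg, sub_self]
  -- choose b and c
  obtain ⟨b, hbmem, hbt, hbu⟩ := hsurj u0 hu0
  obtain ⟨c, hcmem, hct, hcv2⟩ := hsurj v0 hv0
  have hab : ⁅a, b⁆ = u0 := by
    rw [ha_def, sub_lie, hbu, hμ0 b' hb'mem hb't b hbmem hbt, sub_zero]
  have hac : ⁅a, c⁆ = v0 := by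
    rw [ha_def, sub_lie, hcv2, hμ0 b' hb'mem hb't c hcmem hct, sub_zero]
  refine ⟨a, b, c, hamem, hbmem, hcmem, ?_, ?_, ?_, ?_, ?_, ?_⟩
  · -- M 2 = span {⁅a,b⁆, ⁅a,c⁆}
    rw [hab, hac]
    refine le_antisymm ?_ ?_
    · intro w hw
      obtain ⟨α, γ, rfl⟩ := hspan2 w hw
      exact Submodule.add_mem _
        (Submodule.smul_mem _ _ (Submodule.subset_span (by simp)))
        (Submodule.smul_mem _ _ (Submodule.subset_span (by simp)))
    · rw [Submodule.span_le]
      rintro z hzmem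
      rcases hzmem with h | h
      · rw [h]; exact hu0
      · rw [Set.mem_singleton_iff.mp h]; exact hv0
  · -- M 4 = span {s0}
    rw [hab, hac, hs0eq]
    refine le_antisymm ?_ ?_
    · intro z hzm
      obtain ⟨k, rfl⟩ := hspan4 z hzm
      exact Submodule.smul_mem _ _ (Submodule.subset_span rfl)
    · rw [Submodule.span_le, Set.singleton_subset_iff]
      exact hs0mem
  · exact hμ0 b hbmem hbt c hcmem hct
  · rw [hab]; exact hu0a
  · -- ⁅⁅a,b⁆,b⁆ = 0
    obtain ⟨k, hk⟩ := hspan3' ⁅b, u0⁆ (hgrade 1 2 b hbmem u0 hu0)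
    have h1 : ⁅⁅a, b⁆, u0⁆ = k • s0 := by
      obtain ⟨m, hm⟩ := hspan3' ⁅a, u0⁆ (hgrade 1 2 a hamem u0 hu0)
      rw [lie_lie, hk, hm, lie_smul, lie_smul, hat, hbt, smul_zero, sub_zero]
    rw [hab, lie_self] at h1
    have hk0 : k = 0 := by
      rcases smul_eq_zero.mp h1.symm with h | h
      · exact h
      · exact absurd h hs0ne
    rw [hab, ← lie_skew u0 b, hk, hk0, zero_smul, neg_zero]
  · rw [hac]; exact hv0a
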